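/- For λ = 3·(3π)^{2/5}/4, the function u*(x) = sqrt(2/(x² + (4/3)λ)) satisfies ∫_ℝ u*(x)^6 dx = 1 and the ODE -u*'' + (u*)³ - λ(u*)⁵ = 0, and moreover (1/2)∫_ℝ (u*')² dx + (1/4)∫_ℝ (u*)⁴ dx = (5/18)λ. -/

import Mathlib

open MeasureTheory Real

noncomputable def lam : ℝ := 3 * (3 * Real.pi) ^ ((2 : ℝ) / 5) / 4

noncomputable def ustar (x : ℝ) : ℝ := Real.sqrt (2 / (x ^ 2 + (4 / 3) * lam))

noncomputable def A : ℝ := (3 * Real.pi) ^ ((2 : ℝ) / 5)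

lemma hA : 0 < A := Real.rpow_pos_of_pos (by positivity) _

lemma lam_eq : lam = 3 * A / 4 := rfl

lemma four_thirds_lam : (4 / 3) * lam = A := by rw [lam_eq]; ring

lemma hA52 : A ^ 2 * Real.sqrt A = 3 * Real.pi := by
  have h3 : (0:ℝ) ≤ 3 * Real.pi := by positivity
  rw [Real.sqrt_eq_rpow, A, ← Real.rpow_natCast ((3*Real.pi) ^ ((2:ℝ)/5)) 2,
    ← Real.rpow_mul h3, ← Real.rpow_mul h3, ← Real.rpow_add (by positivity)]
  norm_num

lemma hf (x : ℝ) : 0 < x ^ 2 + A := by nlinarith [hA, sq_nonneg x]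

lemma ustar_eq (x : ℝ) : ustar x = Real.sqrt 2 * Real.sqrt (x ^ 2 + A) / (x ^ 2 + A) := by
  rw [ustar, four_thirds_lam, Real.sqrt_div (by norm_num)]
  rw [div_eq_div_iff (Real.sqrt_pos.2 (hf x)).ne' (hf x).ne']
  rw [mul_assoc, Real.mul_self_sqrt (hf x).le]
noncomputable def U1 (x : ℝ) : ℝ := -(Real.sqrt 2 * x * Real.sqrt (x ^ 2 + A) / (x ^ 2 + A) ^ 2)

lemma hsq (x : ℝ) : Real.sqrt (x ^ 2 + A) ^ 2 = x ^ 2 + A := Real.sq_sqrt (hf x).le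

lemma hsqpos (x : ℝ) : 0 < Real.sqrt (x ^ 2 + A) := Real.sqrt_pos.2 (hf x)

lemma ustar_def : ustar = fun y : ℝ => Real.sqrt (2 / (y ^ 2 + A)) :=
  funext fun y => by rw [ustar, four_thirds_lam]

lemma hU1 (x : ℝ) : HasDerivAt ustar (U1 x) x := by
  rw [ustar_def]
  have hinner : HasDerivAt (fun x : ℝ => x ^ 2 + A) (2 * x) x := by
    simpa using (hasDerivAt_pow 2 x).add_const A
  have hg : HasDerivAt (fun x : ℝ => 2 / (x ^ 2 + A))
      ((0 * (x ^ 2 + A) - 2 * (2 * x)) / (x ^ 2 + A) ^ 2) x :=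
    (hasDerivAt_const x 2).div hinner (hf x).ne'
  have hgx : (0:ℝ) < 2 / (x ^ 2 + A) := div_pos two_pos (hf x)
  have := hg.sqrt hgx.ne'
  convert this using 1
  rw [Real.sqrt_div (by norm_num : (0:ℝ) ≤ 2)]
  have t := hsqpos x
  have ht := hsq x
  have h2 : Real.sqrt 2 ^ 2 = 2 := Real.sq_sqrt (by norm_num)
  have h2p : (0:ℝ) < Real.sqrt 2 := Real.sqrt_pos.2 (by norm_num)
  have hne := (hf x).ne'
  have tne := t.ne'
  have h2ne := h2p.ne'
  rw [U1]
  field_simp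
  ring_nf
  linear_combination (-(x * 2)) * h2

noncomputable def U2 (x : ℝ) : ℝ :=
  Real.sqrt 2 * (2 * x ^ 2 - A) * Real.sqrt (x ^ 2 + A) / (x ^ 2 + A) ^ 3

lemma hU2 (x : ℝ) : HasDerivAt U1 (U2 x) x := by
  have hinner : HasDerivAt (fun x : ℝ => x ^ 2 + A) (2 * x) x := by
    simpa using (hasDerivAt_pow 2 x).add_const A
  have hsqrt : HasDerivAt (fun x : ℝ => Real.sqrt (x ^ 2 + A))
      (2 * x / (2 * Real.sqrt (x ^ 2 + A))) x := hinner.sqrt (hf x).ne'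
  have hN : HasDerivAt (fun x : ℝ => Real.sqrt 2 * (x * Real.sqrt (x ^ 2 + A)))
      (Real.sqrt 2 * (1 * Real.sqrt (x ^ 2 + A) + x * (2 * x / (2 * Real.sqrt (x ^ 2 + A))))) x :=
    ((hasDerivAt_id x).mul hsqrt).const_mul _
  have hD : HasDerivAt (fun x : ℝ => (x ^ 2 + A) ^ 2)
      ((2 : ℕ) * (x ^ 2 + A) ^ (2 - 1) * (2 * x)) x := hinner.pow 2
  have := (hN.div hD (pow_ne_zero 2 (hf x).ne')).neg
  have heq : U1 = fun x : ℝ =>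
      -(Real.sqrt 2 * (x * Real.sqrt (x ^ 2 + A)) / (x ^ 2 + A) ^ 2) := by
    funext y; rw [U1]; ring_nf
  rw [heq]
  refine HasDerivAt.congr_deriv this (Eq.symm ?_)
  have t := hsqpos x
  have ht := hsq x
  have hne := (hf x).ne'
  have tne := t.ne'
  rw [U2]
  set s := Real.sqrt (x ^ 2 + A) with hsdef
  rw [← ht]
  have : (0:ℝ) < s := t
  field_simp
  linear_combination (s ^ 2) * ht

lemma deriv_ustar_eq : deriv ustar = U1 := funext fun x => (hU1 x).deriv

lemma deriv_deriv_ustar (x : ℝ) : deriv (deriv ustar) x = U2 x := by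
  rw [deriv_ustar_eq]; exact (hU2 x).deriv

lemma ustar_eq' (x : ℝ) : ustar x = Real.sqrt 2 * Real.sqrt (x ^ 2 + A) / (x ^ 2 + A) := by
  rw [ustar, four_thirds_lam, Real.sqrt_div (by norm_num)]
  rw [div_eq_div_iff (Real.sqrt_pos.2 (hf x)).ne' (hf x).ne']
  rw [mul_assoc, Real.mul_self_sqrt (hf x).le]

lemma ode (x : ℝ) : -(U2 x) + (ustar x) ^ 3 - (3 * A / 4) * (ustar x) ^ 5 = 0 := by
  rw [U2, ustar_eq']
  have ht := hsq x
  have t := hsqpos x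
  have h2 : Real.sqrt 2 ^ 2 = 2 := Real.sq_sqrt (by norm_num)
  have h2p : (0:ℝ) < Real.sqrt 2 := Real.sqrt_pos.2 (by norm_num)
  set s := Real.sqrt (x ^ 2 + A) with hsdef
  rw [← ht]
  have tne : s ≠ 0 := t.ne'
  field_simp
  ring_nf
  have h3 : Real.sqrt 2 ^ 3 = 2 * Real.sqrt 2 := by rw [pow_succ, h2]
  have h5 : Real.sqrt 2 ^ 5 = 4 * Real.sqrt 2 := by
    have h : Real.sqrt 2 ^ 5 = (Real.sqrt 2 ^ 2) ^ 2 * Real.sqrt 2 := by ring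
    rw [h, h2]; norm_num
  have h19 : s ^ 19 = s ^ 17 * (x ^ 2 + A) := by rw [← ht]; ring
  rw [h3, h5]
  linear_combination (8 * Real.sqrt 2) * ht

lemma u6 (x : ℝ) : (ustar x) ^ 6 = 8 / (x ^ 2 + A) ^ 3 := by
  have h : ustar x ^ 2 = 2 / (x ^ 2 + A) := by
    rw [ustar, four_thirds_lam]; exact Real.sq_sqrt (div_pos two_pos (hf x)).le
  calc ustar x ^ 6 = (ustar x ^ 2) ^ 3 := by ring
  _ = (2 / (x ^ 2 + A)) ^ 3 := by rw [h]
  _ = 8 / (x ^ 2 + A) ^ 3 := by rw [div_pow]; norm_num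

lemma u4 (x : ℝ) : (ustar x) ^ 4 = 4 / (x ^ 2 + A) ^ 2 := by
  have h : ustar x ^ 2 = 2 / (x ^ 2 + A) := by
    rw [ustar, four_thirds_lam]; exact Real.sq_sqrt (div_pos two_pos (hf x)).le
  calc ustar x ^ 4 = (ustar x ^ 2) ^ 2 := by ring
  _ = (2 / (x ^ 2 + A)) ^ 2 := by rw [h]
  _ = 4 / (x ^ 2 + A) ^ 2 := by rw [div_pow]; norm_num

lemma u1sq (x : ℝ) : (U1 x) ^ 2 = 2 * x ^ 2 / (x ^ 2 + A) ^ 3 := by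
  have ht := hsq x
  have h2 : Real.sqrt 2 ^ 2 = 2 := Real.sq_sqrt (by norm_num)
  have h1 : (U1 x) ^ 2 = Real.sqrt 2 ^ 2 * x ^ 2 * Real.sqrt (x ^ 2 + A) ^ 2
      / ((x ^ 2 + A) ^ 2) ^ 2 := by rw [U1, neg_sq, div_pow, mul_pow, mul_pow]
  rw [h1, h2, ht]
  rw [div_eq_div_iff (pow_ne_zero 2 (pow_ne_zero 2 (hf x).ne')) (pow_ne_zero 3 (hf x).ne')]
  ring

noncomputable def sA : ℝ := Real.sqrt A

lemma hsA : sA ^ 2 = A := Real.sq_sqrt hA.le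
lemma hsApos : 0 < sA := Real.sqrt_pos.2 hA

open Filter in
lemma t0 : Tendsto (fun x : ℝ => 1 / (x ^ 2 + A)) atTop (nhds 0) := by
  have h := Polynomial.div_tendsto_zero_of_degree_lt (P := (1 : Polynomial ℝ))
    (Q := Polynomial.X ^ 2 + Polynomial.C A)
    (by rw [Polynomial.degree_X_pow_add_C (by norm_num), Polynomial.degree_one]; norm_num)
  simpa using h

open Filter in
lemma t1 : Tendsto (fun x : ℝ => x / (x ^ 2 + A)) atTop (nhds 0) := by
  have h := Polynomial.div_tendsto_zero_of_degree_lt (P := (Polynomial.X : Polynomial ℝ))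
    (Q := Polynomial.X ^ 2 + Polynomial.C A)
    (by rw [Polynomial.degree_X_pow_add_C (by norm_num), Polynomial.degree_X]; norm_num)
  simpa using h

open Filter in
lemma t2 : Tendsto (fun x : ℝ => x / (x ^ 2 + A) ^ 2) atTop (nhds 0) := by
  have h : (fun x : ℝ => x / (x ^ 2 + A) ^ 2)
      = fun x => (x / (x ^ 2 + A)) * (1 / (x ^ 2 + A)) := by
    funext x; rw [div_mul_div_comm, mul_one, sq]
  rw [h]
  simpa using t1.mul t0

open Filter in
lemma tarc : Tendsto (fun x : ℝ => Real.arctan (x / sA)) atTop (nhds (Real.pi / 2)) := by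
  have h1 : Tendsto (fun x : ℝ => x / sA) atTop atTop :=
    tendsto_id.atTop_div_const hsApos
  exact (tendsto_nhds_of_tendsto_nhdsWithin Real.tendsto_arctan_atTop).comp h1

lemma d1 (x : ℝ) : HasDerivAt (fun x : ℝ => x / (x ^ 2 + A))
    ((1 * (x ^ 2 + A) - x * (2 * x)) / (x ^ 2 + A) ^ 2) x :=
  (hasDerivAt_id x).div (by simpa using (hasDerivAt_pow 2 x).add_const A) (hf x).ne'

lemma d2 (x : ℝ) : HasDerivAt (fun x : ℝ => x / (x ^ 2 + A) ^ 2)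
    ((1 * (x ^ 2 + A) ^ 2 - x * ((2 : ℕ) * (x ^ 2 + A) ^ (2 - 1) * (2 * x))) / ((x ^ 2 + A) ^ 2) ^ 2) x :=
  (hasDerivAt_id x).div
    ((by simpa using (hasDerivAt_pow 2 x).add_const A : HasDerivAt (fun x : ℝ => x ^ 2 + A) (2 * x) x).pow 2)
    (pow_ne_zero 2 (hf x).ne')

lemma darc (x : ℝ) : HasDerivAt (fun x : ℝ => Real.arctan (x / sA))
    (1 / (1 + (x / sA) ^ 2) * (1 / sA)) x :=
  HasDerivAt.arctan ((hasDerivAt_id x).div_const sA)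

lemma darc' (x : ℝ) : HasDerivAt (fun x : ℝ => Real.arctan (x / sA))
    (sA / (x ^ 2 + A)) x := by
  convert darc x using 1
  have h1 : 1 + (x / sA) ^ 2 = (x ^ 2 + A) / sA ^ 2 := by
    rw [div_pow, hsA]
    field_simp [hA.ne']
    ring
  rw [h1]
  rw [one_div, inv_div, div_mul_div_comm, hsA]
  rw [div_eq_div_iff (hf x).ne' (by exact mul_ne_zero (hf x).ne' hsApos.ne')]
  linear_combination (x ^ 2 + A) * hsA

noncomputable def G2 (x : ℝ) : ℝ :=
  (1 / (2 * A)) * (x / (x ^ 2 + A)) + (1 / (2 * A * sA)) * Real.arctan (x / sA)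

lemma dG2 (x : ℝ) : HasDerivAt G2 (1 / (x ^ 2 + A) ^ 2) x := by
  have h := ((d1 x).const_mul (1 / (2 * A))).add ((darc' x).const_mul (1 / (2 * A * sA)))
  refine HasDerivAt.congr_deriv h (Eq.symm ?_)
  have hne := (hf x).ne'
  have hsne := hsApos.ne'
  have hAne := hA.ne'
  field_simp
  ring

open Filter in
lemma int2 : ∫ x in Set.Ioi (0:ℝ), 1 / (x ^ 2 + A) ^ 2 = Real.pi / (4 * (A * sA)) := by
  have hl : Tendsto G2 atTop (nhds (Real.pi / (4 * (A * sA)))) := by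
    have h := (t1.const_mul (1 / (2 * A))).add (tarc.const_mul (1 / (2 * A * sA)))
    simp only [mul_zero] at h
    have he : Real.pi / (4 * (A * sA)) = 0 + 1 / (2 * A * sA) * (Real.pi / 2) := by
      rw [zero_add]; ring
    rw [he]; exact h
  have h0 : G2 0 = 0 := by simp [G2]
  have := integral_Ioi_of_hasDerivAt_of_nonneg' (a := (0:ℝ)) (g := G2)
    (g' := fun x => 1 / (x ^ 2 + A) ^ 2)
    (fun x _ => dG2 x) (fun x _ => div_nonneg zero_le_one (sq_nonneg _)) hl
  rw [this, h0, sub_zero]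

noncomputable def G3 (x : ℝ) : ℝ :=
  (1 / (4 * A)) * (x / (x ^ 2 + A) ^ 2) + (3 / (8 * A ^ 2)) * (x / (x ^ 2 + A))
    + (3 / (8 * A ^ 2 * sA)) * Real.arctan (x / sA)

lemma dG3 (x : ℝ) : HasDerivAt G3 (1 / (x ^ 2 + A) ^ 3) x := by
  have h := (((d2 x).const_mul (1 / (4 * A))).add ((d1 x).const_mul (3 / (8 * A ^ 2)))).add
    ((darc' x).const_mul (3 / (8 * A ^ 2 * sA)))
  refine HasDerivAt.congr_deriv h (Eq.symm ?_)
  have hne := (hf x).ne'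
  have hsne := hsApos.ne'
  have hAne := hA.ne'
  field_simp
  ring

open Filter in
lemma int3 : ∫ x in Set.Ioi (0:ℝ), 1 / (x ^ 2 + A) ^ 3 = 3 * Real.pi / (16 * (A ^ 2 * sA)) := by
  have hl : Tendsto G3 atTop (nhds (3 * Real.pi / (16 * (A ^ 2 * sA)))) := by
    have h := ((t2.const_mul (1 / (4 * A))).add (t1.const_mul (3 / (8 * A ^ 2)))).add
      (tarc.const_mul (3 / (8 * A ^ 2 * sA)))
    simp only [mul_zero] at h
    have he : 3 * Real.pi / (16 * (A ^ 2 * sA)) = 0 + 0 + 3 / (8 * A ^ 2 * sA) * (Real.pi / 2) := by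
      rw [zero_add, zero_add]; ring
    rw [he]; exact h
  have h0 : G3 0 = 0 := by simp [G3]
  have := integral_Ioi_of_hasDerivAt_of_nonneg' (a := (0:ℝ)) (g := G3)
    (g' := fun x => 1 / (x ^ 2 + A) ^ 3)
    (fun x _ => dG3 x) (fun x _ => div_nonneg zero_le_one (pow_pos (hf x) 3).le) hl
  rw [this, h0, sub_zero]

noncomputable def HH (x : ℝ) : ℝ :=
  (-(1 : ℝ) / 4) * (x / (x ^ 2 + A) ^ 2) + (1 / (8 * A)) * (x / (x ^ 2 + A))
    + (1 / (8 * A * sA)) * Real.arctan (x / sA)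

lemma dHH (x : ℝ) : HasDerivAt HH (x ^ 2 / (x ^ 2 + A) ^ 3) x := by
  have h := (((d2 x).const_mul (-(1 : ℝ) / 4)).add ((d1 x).const_mul (1 / (8 * A)))).add
    ((darc' x).const_mul (1 / (8 * A * sA)))
  refine HasDerivAt.congr_deriv h (Eq.symm ?_)
  have hne := (hf x).ne'
  have hsne := hsApos.ne'
  have hAne := hA.ne'
  field_simp
  ring

open Filter in
lemma intJ : ∫ x in Set.Ioi (0:ℝ), x ^ 2 / (x ^ 2 + A) ^ 3 = Real.pi / (16 * (A * sA)) := by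
  have hl : Tendsto HH atTop (nhds (Real.pi / (16 * (A * sA)))) := by
    have h := ((t2.const_mul (-(1 : ℝ) / 4)).add (t1.const_mul (1 / (8 * A)))).add
      (tarc.const_mul (1 / (8 * A * sA)))
    simp only [mul_zero] at h
    have he : Real.pi / (16 * (A * sA)) = 0 + 0 + 1 / (8 * A * sA) * (Real.pi / 2) := by
      rw [zero_add, zero_add]; ring
    rw [he]; exact h
  have h0 : HH 0 = 0 := by simp [HH]
  have := integral_Ioi_of_hasDerivAt_of_nonneg' (a := (0:ℝ)) (g := HH)
    (g' := fun x => x ^ 2 / (x ^ 2 + A) ^ 3)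
    (fun x _ => dHH x) (fun x _ => div_nonneg (sq_nonneg _) (pow_pos (hf x) 3).le) hl
  rw [this, h0, sub_zero]

lemma hA3 : A ^ 2 * sA = 3 * Real.pi := hA52

lemma I6 : ∫ x : ℝ, (ustar x) ^ 6 = 1 := by
  have e : (fun x : ℝ => (ustar x) ^ 6) = fun x : ℝ => 8 * (1 / (x ^ 2 + A) ^ 3) := by
    funext x; rw [u6]; ring
  rw [e]
  have h2 : (∫ x : ℝ, 8 * (1 / (x ^ 2 + A) ^ 3))
      = 2 * ∫ x in Set.Ioi (0:ℝ), 8 * (1 / (x ^ 2 + A) ^ 3) := by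
    rw [← integral_comp_abs (f := fun y : ℝ => 8 * (1 / (y ^ 2 + A) ^ 3))]
    simp_rw [sq_abs]
  rw [h2, integral_const_mul, int3, ← hA3]
  have hane := hA.ne'
  have hsne := hsApos.ne'
  field_simp
  ring

lemma I4v : ∫ x : ℝ, (ustar x) ^ 4 = 2 * Real.pi / (A * sA) := by
  have e : (fun x : ℝ => (ustar x) ^ 4) = fun x : ℝ => 4 * (1 / (x ^ 2 + A) ^ 2) := by
    funext x; rw [u4]; ring
  rw [e]
  have h2 : (∫ x : ℝ, 4 * (1 / (x ^ 2 + A) ^ 2))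
      = 2 * ∫ x in Set.Ioi (0:ℝ), 4 * (1 / (x ^ 2 + A) ^ 2) := by
    rw [← integral_comp_abs (f := fun y : ℝ => 4 * (1 / (y ^ 2 + A) ^ 2))]
    simp_rw [sq_abs]
  rw [h2, integral_const_mul, int2]
  have hane := hA.ne'
  have hsne := hsApos.ne'
  field_simp

lemma I2v : ∫ x : ℝ, (deriv ustar x) ^ 2 = Real.pi / (4 * (A * sA)) := by
  have e : (fun x : ℝ => (deriv ustar x) ^ 2) = fun x : ℝ => 2 * (x ^ 2 / (x ^ 2 + A) ^ 3) := by
    funext x; rw [deriv_ustar_eq, u1sq]; ring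
  rw [e]
  have h2 : (∫ x : ℝ, 2 * (x ^ 2 / (x ^ 2 + A) ^ 3))
      = 2 * ∫ x in Set.Ioi (0:ℝ), 2 * (x ^ 2 / (x ^ 2 + A) ^ 3) := by
    rw [← integral_comp_abs (f := fun y : ℝ => 2 * (y ^ 2 / (y ^ 2 + A) ^ 3))]
    simp_rw [sq_abs]
  rw [h2, integral_const_mul, intJ]
  have hane := hA.ne'
  have hsne := hsApos.ne'
  field_simp
  ring

theorem stmt_16 :
    (∫ x : ℝ, (ustar x) ^ 6) = 1 ∧
    (∀ x : ℝ, -(deriv (deriv ustar) x) + (ustar x) ^ 3 - lam * (ustar x) ^ 5 = 0) ∧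
    (1 / 2) * (∫ x : ℝ, (deriv ustar x) ^ 2) + (1 / 4) * (∫ x : ℝ, (ustar x) ^ 4)
      = (5 / 18) * lam := by
  refine ⟨I6, fun x => ?_, ?_⟩
  · rw [deriv_deriv_ustar, lam_eq]
    exact ode x
  · rw [I2v, I4v, lam_eq]
    have hane := hA.ne'
    have hsne := hsApos.ne'
    field_simp
    linear_combination (-30) * hA3
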